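/- Every strongly connected digraph has a spanning strongly connected 3-partite subdigraph, i.e., a spanning strong subdigraph whose underlying graph is 3-colourable. -/

import Mathlib

/-- A digraph (given by its arc relation) is strong if every vertex reaches
every other vertex by a directed path. -/
def IsStrong {V : Type*} (D : V → V → Prop) : Prop :=
  ∀ u v : V, Relation.ReflTransGen D u v

open Relation

section Helpers

variable {V : Type*}

lemma cuts_of_rtg {F : V → V → Prop} {a b : V} (h : ReflTransGen F a b) (T : Set V)
    (ha : a ∈ T) : b ∉ T → ∃ x y, F x y ∧ x ∈ T ∧ y ∉ T := by
  induction h with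
  | refl => exact fun hb => absurd ha hb
  | @tail c d h1 h2 IH =>
    intro hb
    by_cases hc : c ∈ T
    · exact ⟨c, d, h2, hc, hb⟩
    · exact IH hc

lemma rtg_of_cuts {F : V → V → Prop} {a b : V}
    (h : ∀ T : Set V, a ∈ T → b ∉ T → ∃ x y, F x y ∧ x ∈ T ∧ y ∉ T) :
    ReflTransGen F a b := by
  by_contra hc
  obtain ⟨x, y, hxy, hx, hy⟩ := h {z | ReflTransGen F a z} ReflTransGen.refl hc
  exact hy (ReflTransGen.tail hx hxy)

lemma last_occ {a : V} : ∀ {l : List V}, a ∈ l → ∃ l1 l2, l = l1 ++ a :: l2 ∧ a ∉ l2 := by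
  intro l hl
  induction l with
  | nil => simp at hl
  | cons x xs IH =>
    by_cases hx : a ∈ xs
    · obtain ⟨l1, l2, heq, hni⟩ := IH hx
      exact ⟨x :: l1, l2, by simp [heq], hni⟩
    · have : a = x := by
        rcases List.mem_cons.mp hl with h | h
        · exact h
        · exact absurd h hx
      exact ⟨[], xs, by simp [this], hx⟩

lemma getLastD_mem_cons : ∀ (l : List V) (a : V), l.getLastD a ∈ a :: l := by
  intro l
  induction l with
  | nil => intro a; exact List.mem_cons_self
  | cons b l IH =>
    intro a
    rw [List.getLastD_cons]
    exact List.mem_cons_of_mem a (IH b)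

lemma getLastD_append (l2 : List V) (a : V) :
    ∀ (l1 : List V) (d : V), (l1 ++ a :: l2).getLastD d = l2.getLastD a := by
  intro l1
  induction l1 with
  | nil => intro d; rw [List.nil_append, List.getLastD_cons]
  | cons x xs IH => intro d; rw [List.cons_append, List.getLastD_cons]; exact IH x

/-- consecutive pairs of a list -/
def consec (l : List V) (a b : V) : Prop := ∃ l1 l2, l = l1 ++ a :: b :: l2

lemma consec_mem {l : List V} {a b : V} (h : consec l a b) : a ∈ l ∧ b ∈ l := by
  obtain ⟨l1, l2, rfl⟩ := h
  simp

lemma consec_sub_of_chain' {l : List V} {H : V → V → Prop} (h : List.Chain' H l)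
    {a b : V} (hc : consec l a b) : H a b := by
  obtain ⟨l1, l2, rfl⟩ := hc
  have := h.suffix ⟨l1, rfl⟩
  exact (List.isChain_cons_cons.mp this).1

lemma consec_cons_mono {x : V} {l : List V} {a b : V} (h : consec l a b) :
    consec (x :: l) a b := by
  obtain ⟨l1, l2, rfl⟩ := h
  exact ⟨x :: l1, l2, rfl⟩


lemma consec_into_head {t x : V} {rest : List V} (ht : t ∉ rest)
    (h : consec (t :: rest) x t) : False := by
  obtain ⟨l1, l2, heq⟩ := h
  apply ht
  cases l1 with
  | nil =>
    simp only [List.nil_append, List.cons.injEq] at heq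
    rw [heq.2]
    exact List.mem_cons_self
  | cons z zs =>
    simp only [List.cons_append, List.cons.injEq] at heq
    rw [heq.2]
    simp

lemma out_exists_unique (rest : List V) (t s'' : V) (ht : t ∉ rest) :
    (consec (t :: rest) t (rest.headD s'') ∨
      (t = rest.getLastD t ∧ rest.headD s'' = s'')) ∧
    (∀ x, consec (t :: rest) t x → x = rest.headD s'') ∧
    (∀ x, t = rest.getLastD t → x = s'' → x = rest.headD s'') := by
  cases rest with
  | nil =>
    refine ⟨Or.inr ⟨rfl, rfl⟩, ?_, ?_⟩
    · rintro x ⟨l1, l2, heq⟩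
      exfalso
      have := congrArg List.length heq
      simp at this
      omega
    · intro x _ hx
      exact hx
  | cons r rest₂ =>
    refine ⟨Or.inl ⟨[], rest₂, rfl⟩, ?_, ?_⟩
    · rintro x ⟨l1, l2, heq⟩
      cases l1 with
      | nil =>
        simp only [List.nil_append, List.cons.injEq] at heq
        exact heq.2.1.symm
      | cons z zs =>
        exfalso
        simp only [List.cons_append, List.cons.injEq] at heq
        apply ht
        rw [heq.2]
        simp
    · intro x hteq _
      exfalso
      apply ht
      rw [List.getLastD_cons] at hteq
      rw [hteq]
      exact getLastD_mem_cons rest₂ r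

lemma rtg_consec_head : ∀ (rest : List V) (t x : V), x ∈ t :: rest →
    ReflTransGen (consec (t :: rest)) t x := by
  intro rest
  induction rest with
  | nil =>
    intro t x hx
    simp at hx
    exact hx ▸ ReflTransGen.refl
  | cons r rest₂ IH =>
    intro t x hx
    rcases List.mem_cons.mp hx with rfl | hx
    · exact ReflTransGen.refl
    · have h1 : ReflTransGen (consec (r :: rest₂)) r x := IH r x hx
      have h2 : ReflTransGen (consec (t :: r :: rest₂)) r x :=
        ReflTransGen.mono (fun p q hpq => consec_cons_mono hpq) _ _ h1
      exact ReflTransGen.head ⟨[], rest₂, rfl⟩ h2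

lemma rtg_consec_last : ∀ (rest : List V) (t x : V), x ∈ t :: rest →
    ReflTransGen (consec (t :: rest)) x (rest.getLastD t) := by
  intro rest
  induction rest with
  | nil =>
    intro t x hx
    simp at hx
    exact hx ▸ ReflTransGen.refl
  | cons r rest₂ IH =>
    intro t x hx
    simp only [List.getLastD_cons]
    rcases List.mem_cons.mp hx with rfl | hx
    · have h1 : ReflTransGen (consec (r :: rest₂)) r (rest₂.getLastD r) :=
        IH r r List.mem_cons_self
      exact ReflTransGen.head ⟨[], rest₂, rfl⟩
        (ReflTransGen.mono (fun p q hpq => consec_cons_mono hpq) _ _ h1)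
    · exact ReflTransGen.mono (fun p q hpq => consec_cons_mono hpq) _ _ (IH r x hx)

/-- extract from a walk leaving `S` a path outside `S` (no repeat of the head)
    that re-enters `S`. -/
lemma extract {H : V → V → Prop} {S : Set V} {t s₀ : V}
    (hw : ReflTransGen H t s₀) (hs₀ : s₀ ∈ S) :
    t ∉ S → ∃ (rest : List V) (s'' : V), t ∉ rest ∧ (∀ y ∈ rest, y ∉ S) ∧
      List.Chain H t rest ∧ s'' ∈ S ∧ H (rest.getLastD t) s'' := by
  induction hw using ReflTransGen.head_induction_on with
  | refl => exact fun h => absurd hs₀ h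
  | @head a c h1 h2 IH =>
    intro ha
    by_cases hc : c ∈ S
    · exact ⟨[], c, by simp, by simp, List.Chain.nil, hc, h1⟩
    · obtain ⟨rest', s'', hct, hallS, hchain, hs'', hlast⟩ := IH hc
      have hall : ∀ y ∈ c :: rest', y ∉ S := by
        intro y hy
        rcases List.mem_cons.mp hy with rfl | hy
        · exact hc
        · exact hallS y hy
      by_cases hmem : a ∈ c :: rest'
      · obtain ⟨l1, l2, heq, hnotin⟩ := last_occ hmem
        refine ⟨l2, s'', hnotin, ?_, ?_, hs'', ?_⟩
        · intro y hy
          exact hall y (by rw [heq]; simp [hy])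
        · have hch' : List.Chain' H (c :: rest') := hchain
          have hsuf : (a :: l2) <:+ (c :: rest') := ⟨l1, heq.symm⟩
          exact hch'.suffix hsuf
        · have h3 : (c :: rest').getLastD c = l2.getLastD a := by
            rw [heq]; exact getLastD_append l2 a l1 c
          rw [List.getLastD_cons] at h3
          rwa [h3] at hlast
      · refine ⟨c :: rest', s'', hmem, hall, List.Chain.cons h1 hchain, hs'', ?_⟩
        rw [List.getLastD_cons]
        exact hlast

lemma fin3_choice : ∀ a b : Fin 3, ∃ c : Fin 3, c ≠ a ∧ c ≠ b := by decide

end Helpers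

section Ear

variable {V : Type*} [Fintype V]

/-- Key lemma: inside a strong digraph `H`, any non-spanning strong partial
subdigraph extends (by ears) to a spanning strong subdigraph of `H` having a
new vertex of in-degree and out-degree one. -/
lemma ear_lemma (H : V → V → Prop) (hH : IsStrong H) :
    ∀ (k : ℕ) (S : Set V) (F : V → V → Prop),
      Sᶜ.ncard ≤ k →
      (∀ a b, F a b → H a b) → (∀ a b, F a b → a ∈ S ∧ b ∈ S) →
      (∀ a ∈ S, ∀ b ∈ S, ReflTransGen F a b) →
      S.Nonempty → S ≠ Set.univ →
      ∃ F' : V → V → Prop, (∀ a b, F' a b → H a b) ∧ IsStrong F' ∧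
        ∃ v, v ∉ S ∧ (∃ u, F' u v ∧ ∀ x, F' x v → x = u) ∧
          (∃ w, F' v w ∧ ∀ x, F' v x → x = w) := by
  intro k
  induction k with
  | zero =>
    intro S F hk _ _ _ _ hSuniv
    exfalso
    have h0 : Sᶜ.ncard = 0 := Nat.le_zero.mp hk
    have : Sᶜ = ∅ := (Set.ncard_eq_zero (Set.toFinite _)).mp h0
    exact hSuniv (Set.compl_empty_iff.mp this)
  | succ k IH =>
    intro S F hk hFH hFS hFstrong hSne hSuniv
    obtain ⟨x0, hx0⟩ := hSne
    obtain ⟨y0, hy0⟩ := (Set.ne_univ_iff_exists_notMem S).mp hSuniv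
    obtain ⟨s, t, hst, hsS, htS⟩ := cuts_of_rtg (hH x0 y0) S hx0 hy0
    obtain ⟨rest, s'', htrest, hrestS, hchain, hs''S, hexit⟩ := extract (hH t s) hsS htS
    have hsne_t : s ≠ t := fun h => htS (h ▸ hsS)
    -- the new subdigraph
    set l : List V := t :: rest with hldef
    set e : V := rest.getLastD t with hedef
    set F'' : V → V → Prop :=
      fun a b => F a b ∨ (a = s ∧ b = t) ∨ consec l a b ∨ (a = e ∧ b = s'') with hF''def
    set S'' : Set V := S ∪ {z | z ∈ l} with hS''def
    have hchain' : List.Chain' H l := hchain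
    have htl : t ∈ l := List.mem_cons_self
    have hel : e ∈ l := getLastD_mem_cons rest t
    have hF''H : ∀ a b, F'' a b → H a b := by
      rintro a b (h | ⟨ha, hb⟩ | h | ⟨ha, hb⟩)
      · exact hFH a b h
      · rw [ha, hb]; exact hst
      · exact consec_sub_of_chain' hchain' h
      · rw [ha, hb]; exact hexit
    have hF''S : ∀ a b, F'' a b → a ∈ S'' ∧ b ∈ S'' := by
      rintro a b (h | ⟨ha, hb⟩ | h | ⟨ha, hb⟩)
      · exact ⟨Or.inl (hFS a b h).1, Or.inl (hFS a b h).2⟩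
      · exact ⟨by rw [ha]; exact Or.inl hsS, by rw [hb]; exact Or.inr htl⟩
      · exact ⟨Or.inr (consec_mem h).1, Or.inr (consec_mem h).2⟩
      · exact ⟨by rw [ha]; exact Or.inr hel, by rw [hb]; exact Or.inl hs''S⟩
    -- strongness of F'' on S''
    have hrtgS : ∀ a ∈ S, ∀ b ∈ S, ReflTransGen F'' a b := fun a ha b hb =>
      ReflTransGen.mono (fun x y h => Or.inl h) _ _ (hFstrong a ha b hb)
    have harc_st : F'' s t := Or.inr (Or.inl ⟨rfl, rfl⟩)
    have harc_es : F'' e s'' := Or.inr (Or.inr (Or.inr ⟨rfl, rfl⟩))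
    have h_t_to : ∀ z ∈ l, ReflTransGen F'' t z := fun z hz =>
      ReflTransGen.mono (fun x y h => Or.inr (Or.inr (Or.inl h))) _ _ (rtg_consec_head rest t z hz)
    have h_to_e : ∀ z ∈ l, ReflTransGen F'' z e := fun z hz =>
      ReflTransGen.mono (fun x y h => Or.inr (Or.inr (Or.inl h))) _ _ (rtg_consec_last rest t z hz)
    have hS''_to_x0 : ∀ a ∈ S'', ReflTransGen F'' a x0 := by
      rintro a (ha | ha)
      · exact hrtgS a ha x0 hx0
      · exact ((h_to_e a ha).tail harc_es).trans (hrtgS s'' hs''S x0 hx0)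
    have hx0_to_S'' : ∀ b ∈ S'', ReflTransGen F'' x0 b := by
      rintro b (hb | hb)
      · exact hrtgS x0 hx0 b hb
      · exact ((hrtgS x0 hx0 s hsS).tail harc_st).trans (h_t_to b hb)
    have hstrongS'' : ∀ a ∈ S'', ∀ b ∈ S'', ReflTransGen F'' a b := fun a ha b hb =>
      (hS''_to_x0 a ha).trans (hx0_to_S'' b hb)
    -- in-degree of t is one
    have huniq_in : ∀ x, F'' x t → x = s := by
      rintro x (h | ⟨hx, _⟩ | h | ⟨_, hb⟩)
      · exact absurd (hFS x t h).2 htS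
      · exact hx
      · exact absurd h (fun hc => consec_into_head htrest hc)
      · exact absurd (by rw [hb]; exact hs''S : t ∈ S) htS
    -- out-degree of t is one
    obtain ⟨hwex0, hwu1, hwu2⟩ := out_exists_unique rest t s'' htrest
    have hw_ex : F'' t (rest.headD s'') := by
      rcases hwex0 with h | ⟨h1, h2⟩
      · exact Or.inr (Or.inr (Or.inl h))
      · exact Or.inr (Or.inr (Or.inr ⟨h1, h2⟩))
    have hw_uniq : ∀ x, F'' t x → x = rest.headD s'' := by
      rintro x (h | ⟨ht', _⟩ | h | ⟨ht', hx⟩)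
      · exact absurd (hFS t x h).1 htS
      · exact absurd ht'.symm hsne_t
      · exact hwu1 x h
      · exact hwu2 x ht' hx
    by_cases hU : S'' = Set.univ
    · refine ⟨F'', hF''H, ?_, t, htS, ⟨s, harc_st, huniq_in⟩,
        ⟨rest.headD s'', hw_ex, hw_uniq⟩⟩
      intro a b
      exact hstrongS'' a (by rw [hU]; trivial) b (by rw [hU]; trivial)
    · have hsub : S''ᶜ ⊂ Sᶜ := by
        constructor
        · exact Set.compl_subset_compl.mpr Set.subset_union_left
        · intro hcon
          exact (hcon htS) (Or.inr htl)
      have hlt : S''ᶜ.ncard < Sᶜ.ncard := Set.ncard_lt_ncard hsub (Set.toFinite _)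
      obtain ⟨F', hF'H, hF's, v, hvS'', hvin, hvout⟩ :=
        IH S'' F'' (by omega) hF''H hF''S hstrongS'' ⟨x0, Or.inl hx0⟩ hU
      exact ⟨F', hF'H, hF's, v, fun hv => hvS'' (Or.inl hv), hvin, hvout⟩

/-- existence of an arc-minimal spanning strong subdigraph -/
lemma exists_min : ∀ (k : ℕ) (D : V → V → Prop),
    {p : V × V | D p.1 p.2}.ncard ≤ k → IsStrong D →
    ∃ M : V → V → Prop, (∀ a b, M a b → D a b) ∧ IsStrong M ∧
      ∀ G : V → V → Prop, (∀ a b, G a b → M a b) → IsStrong G →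
        ∀ a b, M a b → G a b := by
  intro k
  induction k with
  | zero =>
    intro D hk hD
    by_cases hmin : ∀ G : V → V → Prop, (∀ a b, G a b → D a b) → IsStrong G →
        ∀ a b, D a b → G a b
    · exact ⟨D, fun _ _ h => h, hD, hmin⟩
    · exfalso
      push_neg at hmin
      obtain ⟨G, hGD, hGs, a, b, hDab, hnG⟩ := hmin
      have hss : {p : V × V | G p.1 p.2} ⊂ {p | D p.1 p.2} := by
        constructor
        · exact fun p hp => hGD _ _ hp
        · intro hcon
          have hm : (a, b) ∈ {p : V × V | D p.1 p.2} := hDab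
          exact hnG (hcon hm)
      have := Set.ncard_lt_ncard hss (Set.toFinite _)
      omega
  | succ k IH =>
    intro D hk hD
    by_cases hmin : ∀ G : V → V → Prop, (∀ a b, G a b → D a b) → IsStrong G →
        ∀ a b, D a b → G a b
    · exact ⟨D, fun _ _ h => h, hD, hmin⟩
    · push_neg at hmin
      obtain ⟨G, hGD, hGs, a, b, hDab, hnG⟩ := hmin
      have hss : {p : V × V | G p.1 p.2} ⊂ {p | D p.1 p.2} := by
        constructor
        · exact fun p hp => hGD _ _ hp
        · intro hcon
          have hm : (a, b) ∈ {p : V × V | D p.1 p.2} := hDab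
          exact hnG (hcon hm)
      have hlt := Set.ncard_lt_ncard hss (Set.toFinite _)
      obtain ⟨M, hMG, hMs, hMmin⟩ := IH G (by omega) hGs
      exact ⟨M, fun x y h => hGD x y (hMG x y h), hMs, hMmin⟩

end Ear

section Main

universe u

lemma main_aux : ∀ (n : ℕ) (V : Type u) [Fintype V], Fintype.card V = n →
    ∀ D : V → V → Prop, (∀ v, ¬ D v v) → IsStrong D →
    ∃ H : V → V → Prop, (∀ u v, H u v → D u v) ∧ IsStrong H ∧
      ∃ P : V → Fin 3, ∀ u v, H u v → P u ≠ P v := by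
  intro n
  induction n using Nat.strong_induction_on with
  | _ n IHn =>
    intro V _ hcard D hloop hD
    by_cases hn : n ≤ 1
    · refine ⟨fun _ _ => False, by simp, ?_, fun _ => 0, by simp⟩
      intro a b
      have hab : a = b := Fintype.card_le_one_iff.mp (hcard ▸ hn) a b
      exact hab ▸ ReflTransGen.refl
    · push_neg at hn
      -- arc-minimal spanning strong subdigraph M of D
      obtain ⟨M, hMD, hMs, hMmin⟩ := exists_min _ D le_rfl hD
      have hMloop : ∀ v, ¬ M v v := fun v h => hloop v (hMD v v h)
      have hcard1 : 1 < Fintype.card V := hcard ▸ hn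
      obtain ⟨x, y, hxy⟩ := Fintype.exists_pair_of_one_lt_card hcard1
      -- the ear lemma applied to M from S = {x}, F = ∅
      obtain ⟨F', hF'M, hF's, v, hvS, ⟨u, hFuv, huin⟩, ⟨w, hFvw, huout⟩⟩ :=
        ear_lemma M hMs (({x} : Set V)ᶜ.ncard) {x} (fun _ _ => False) le_rfl
          (by simp) (by simp)
          (by
            intro a ha b hb
            simp only [Set.mem_singleton_iff] at ha hb
            subst ha; subst hb
            exact ReflTransGen.refl)
          ⟨x, rfl⟩
          (by
            rw [Set.ne_univ_iff_exists_notMem]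
            exact ⟨y, by simp [(Ne.symm hxy)]⟩)
      -- since M is minimal, F' = M (as F' is a spanning strong subdigraph of M)
      have hMF' : ∀ a b, M a b → F' a b := hMmin F' hF'M hF's
      have hMuv : M u v := hF'M u v hFuv
      have hMvw : M v w := hF'M v w hFvw
      have huinM : ∀ z, M z v → z = u := fun z hz => huin z (hMF' z v hz)
      have huoutM : ∀ z, M v z → z = w := fun z hz => huout z (hMF' v z hz)
      have hune : u ≠ v := fun h => hMloop v (h ▸ hMuv)
      have hwne : w ≠ v := fun h => hMloop v (h ▸ hMvw)
      -- suppress v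
      haveI : DecidableEq V := Classical.decEq V
      set V' : Type u := {z : V // z ≠ v} with hV'def
      have hcard' : Fintype.card V' = n - 1 := by
        have h2 := Fintype.card_subtype_compl (fun z : V => z = v)
        rw [Fintype.card_subtype_eq v, hcard] at h2
        exact h2
      set H' : V' → V' → Prop :=
        fun a b => M a.1 b.1 ∨ (a.1 = u ∧ b.1 = w ∧ u ≠ w) with hH'def
      have hloop' : ∀ a : V', ¬ H' a a := by
        rintro a (h | ⟨h1, h2, h3⟩)
        · exact hMloop a.1 h
        · exact h3 (h1 ▸ h2 ▸ rfl)
      have hstrong' : IsStrong H' := by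
        rintro ⟨a, hav⟩ ⟨b, hbv⟩
        apply rtg_of_cuts
        intro T haT hbT
        set That : Set V :=
          {z : V | (z = v ∧ (⟨u, hune⟩ : V') ∈ T) ∨ ∃ h : z ≠ v, (⟨z, h⟩ : V') ∈ T}
          with hThat
        have haThat : a ∈ That := Or.inr ⟨hav, haT⟩
        have hbThat : b ∉ That := by
          rintro (⟨h1, _⟩ | ⟨h1, h2⟩)
          · exact hbv h1
          · exact hbT h2
        obtain ⟨p, q, hpq, hpT, hqT⟩ := cuts_of_rtg (hMs a b) That haThat hbThat
        by_cases hqv : q = v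
        · exfalso
          have hpu : p = u := huinM p (hqv ▸ hpq)
          have hunT : (⟨u, hune⟩ : V') ∉ T := by
            intro hmem
            exact hqT (Or.inl ⟨hqv, hmem⟩)
          rcases hpT with ⟨h1, h2⟩ | ⟨h1, h2⟩
          · exact hune (hpu.symm.trans h1)
          · exact hunT (by rwa [show (⟨p, h1⟩ : V') = ⟨u, hune⟩ from Subtype.ext hpu] at h2)
        · have hq'nT : (⟨q, hqv⟩ : V') ∉ T := fun hmem => hqT (Or.inr ⟨hqv, hmem⟩)
          by_cases hpv : p = v
          · have huT : (⟨u, hune⟩ : V') ∈ T := by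
              rcases hpT with ⟨_, h2⟩ | ⟨h1, _⟩
              · exact h2
              · exact absurd hpv h1
            have hqw : q = w := huoutM q (hpv ▸ hpq)
            have hneuw : u ≠ w := by
              intro h
              apply hq'nT
              rwa [show (⟨q, hqv⟩ : V') = ⟨u, hune⟩ from Subtype.ext (hqw.trans h.symm)]
            refine ⟨⟨u, hune⟩, ⟨q, hqv⟩, Or.inr ⟨rfl, hqw, hneuw⟩, huT, hq'nT⟩
          · have hp'T : (⟨p, hpv⟩ : V') ∈ T := by
              rcases hpT with ⟨h1, _⟩ | ⟨h1, h2⟩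
              · exact absurd h1 hpv
              · exact h2
            exact ⟨⟨p, hpv⟩, ⟨q, hqv⟩, Or.inl hpq, hp'T, hq'nT⟩
      -- apply induction hypothesis
      obtain ⟨H'', hH''H', hH''s, P, hP⟩ :=
        IHn (n - 1) (by omega) V' hcard' H' hloop' hstrong'
      have hreal : ∀ (p q : V'), H'' p q → ¬(p.1 = u ∧ q.1 = w) → M p.1 q.1 := by
        intro p q h hn'
        rcases hH''H' p q h with h' | ⟨h1, h2, _⟩
        · exact h'
        · exact absurd ⟨h1, h2⟩ hn'
      -- lift back
      set H3 : V → V → Prop := fun p q =>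
        (∃ hp : p ≠ v, ∃ hq : q ≠ v, H'' ⟨p, hp⟩ ⟨q, hq⟩ ∧ M p q) ∨
          (p = u ∧ q = v) ∨ (p = v ∧ q = w) with hH3def
      have hH3D : ∀ p q, H3 p q → D p q := by
        rintro p q (⟨_, _, _, h⟩ | ⟨hp, hq⟩ | ⟨hp, hq⟩)
        · exact hMD p q h
        · rw [hp, hq]; exact hMD u v hMuv
        · rw [hp, hq]; exact hMD v w hMvw
      have hH3s : IsStrong H3 := by
        intro a b
        apply rtg_of_cuts
        intro T haT hbT
        by_cases hvT : v ∈ T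
        · by_cases hwT : w ∈ T
          · have hbv : b ≠ v := fun h => hbT (h ▸ hvT)
            set T' : Set V' := {z : V' | z.1 ∈ T} with hT'
            obtain ⟨p, q, hpq, hpT', hqT'⟩ :=
              cuts_of_rtg (hH''s ⟨w, hwne⟩ ⟨b, hbv⟩) T' hwT hbT
            have hM : M p.1 q.1 := by
              apply hreal p q hpq
              rintro ⟨h1, h2⟩
              exact hqT' (show q.1 ∈ T from h2 ▸ hwT)
            exact ⟨p.1, q.1, Or.inl ⟨p.2, q.2, hpq, hM⟩, hpT', hqT'⟩
          · exact ⟨v, w, Or.inr (Or.inr ⟨rfl, rfl⟩), hvT, hwT⟩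
        · by_cases huT : u ∈ T
          · exact ⟨u, v, Or.inr (Or.inl ⟨rfl, rfl⟩), huT, hvT⟩
          · have hav : a ≠ v := fun h => hvT (h ▸ haT)
            set T' : Set V' := {z : V' | z.1 ∈ T} with hT'
            obtain ⟨p, q, hpq, hpT', hqT'⟩ :=
              cuts_of_rtg (hH''s ⟨a, hav⟩ ⟨u, hune⟩) T' haT huT
            have hM : M p.1 q.1 := by
              apply hreal p q hpq
              rintro ⟨h1, h2⟩
              exact huT (show u ∈ T from h1 ▸ hpT')
            exact ⟨p.1, q.1, Or.inl ⟨p.2, q.2, hpq, hM⟩, hpT', hqT'⟩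
      -- 3-coloring
      obtain ⟨c, hcu, hcw⟩ := fin3_choice (P ⟨u, hune⟩) (P ⟨w, hwne⟩)
      refine ⟨H3, hH3D, hH3s, fun z => if h : z = v then c else P ⟨z, h⟩, ?_⟩
      intro p q hpq
      show (if h : p = v then c else P ⟨p, h⟩) ≠ (if h : q = v then c else P ⟨q, h⟩)
      rcases hpq with ⟨hp, hq, h, _⟩ | ⟨hp, hq⟩ | ⟨hp, hq⟩
      · rw [dif_neg hp, dif_neg hq]
        exact hP _ _ h
      · rw [hp, hq, dif_neg hune, dif_pos rfl]
        exact hcu.symm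
      · rw [hp, hq, dif_pos rfl, dif_neg hwne]
        exact hcw

end Main

/-- Every strongly connected digraph has a spanning strongly connected
3-partite subdigraph. -/
theorem stmt10 {V : Type*} [Fintype V] (D : V → V → Prop)
    (hloopless : ∀ v, ¬ D v v) (hstrong : IsStrong D) :
    ∃ H : V → V → Prop, (∀ u v, H u v → D u v) ∧ IsStrong H ∧
      ∃ P : V → Fin 3, ∀ u v, H u v → P u ≠ P v := by
  exact main_aux (Fintype.card V) V rfl D hloopless hstrong
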